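/- Let R₀ > 0 and let ω be a twice continuously differentiable real-valued function on the exterior domain {z ∈ ℂ : |z| > R₀} satisfying Δω = 2·sinh(2ω). Set K₀ = ln 4 + (1/2)·ln((2+√5)/4). Then for every z with |z| > R₀ + 2, |ω(z)| ≤ K₀/cosh(|z| − R₀ − 2). In particular, ω(z) → 0 uniformly as |z| → ∞. -/

import Mathlib

open Real Filter Set

/-- The Euclidean Laplacian of a real-valued function on (an open subset of) `ℂ ≅ ℝ²`:
`Δf = ∂²f/∂x² + ∂²f/∂y²`. -/
noncomputable def laplacian (f : ℂ → ℝ) (z : ℂ) : ℝ :=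
  fderiv ℝ (fun w => fderiv ℝ f w 1) z 1 +
    fderiv ℝ (fun w => fderiv ℝ f w Complex.I) z Complex.I


lemma laplacian_eq {f fx fy : ℂ → ℝ} {s : Set ℂ} (hs : IsOpen s)
    (hf : ∀ v ∈ s, HasFDerivAt f ((fx v) • (Complex.reCLM : ℂ →L[ℝ] ℝ) +
      (fy v) • (Complex.imCLM : ℂ →L[ℝ] ℝ)) v)
    {w : ℂ} (hw : w ∈ s) {Lx Ly : ℂ →L[ℝ] ℝ}
    (hx : HasFDerivAt fx Lx w) (hy : HasFDerivAt fy Ly w) :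
    laplacian f w = Lx 1 + Ly Complex.I := by
  have h1 : (fun v => fderiv ℝ f v 1) =ᶠ[nhds w] fx := by
    filter_upwards [hs.mem_nhds hw] with v hv
    rw [(hf v hv).fderiv]
    simp
  have h2 : (fun v => fderiv ℝ f v Complex.I) =ᶠ[nhds w] fy := by
    filter_upwards [hs.mem_nhds hw] with v hv
    rw [(hf v hv).fderiv]
    simp
  unfold laplacian
  rw [h1.fderiv_eq, h2.fderiv_eq, hx.fderiv, hy.fderiv]

lemma diffAt_fderiv_apply {f : ℂ → ℝ} {s : Set ℂ} (hs : IsOpen s)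
    (hf : ContDiffOn ℝ 2 f s) {w : ℂ} (hw : w ∈ s) (e : ℂ) :
    DifferentiableAt ℝ (fun v => fderiv ℝ f v e) w := by
  have h1 : ContDiffAt ℝ 1 (fderiv ℝ f) w :=
    (hf.contDiffAt (hs.mem_nhds hw)).fderiv_right (by norm_num)
  exact ((ContinuousLinearMap.apply ℝ ℝ e).differentiable.differentiableAt).comp w
    (h1.differentiableAt one_ne_zero)

lemma laplacian_add {f g : ℂ → ℝ} {s : Set ℂ} (hs : IsOpen s)
    (hf : ContDiffOn ℝ 2 f s) (hg : ContDiffOn ℝ 2 g s) {w : ℂ} (hw : w ∈ s) :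
    laplacian (fun v => f v + g v) w = laplacian f w + laplacian g w := by
  have heve : ∀ e : ℂ, (fun v => fderiv ℝ (fun x => f x + g x) v e)
      =ᶠ[nhds w] fun v => fderiv ℝ f v e + fderiv ℝ g v e := by
    intro e
    filter_upwards [hs.mem_nhds hw] with v hv
    have hfv : DifferentiableAt ℝ f v :=
      (hf.differentiableOn (by norm_num)).differentiableAt (hs.mem_nhds hv)
    have hgv : DifferentiableAt ℝ g v :=
      (hg.differentiableOn (by norm_num)).differentiableAt (hs.mem_nhds hv)
    rw [fderiv_fun_add hfv hgv]
    simp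
  unfold laplacian
  rw [(heve 1).fderiv_eq, (heve Complex.I).fderiv_eq,
    fderiv_fun_add (diffAt_fderiv_apply hs hf hw 1) (diffAt_fderiv_apply hs hg hw 1),
    fderiv_fun_add (diffAt_fderiv_apply hs hf hw Complex.I) (diffAt_fderiv_apply hs hg hw Complex.I)]
  simp
  ring

lemma laplacian_neg (f : ℂ → ℝ) (w : ℂ) : laplacian (fun v => -f v) w = -laplacian f w := by
  have h : ∀ e : ℂ, (fun v => fderiv ℝ (fun x => -f x) v e) = fun v => -(fderiv ℝ f v e) := by
    intro e; funext v; rw [fderiv_fun_neg]; simp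
  unfold laplacian
  rw [h 1, h Complex.I]
  have h2 : ∀ e : ℂ, fderiv ℝ (fun v => -(fderiv ℝ f v e)) w e = - fderiv ℝ (fun v => fderiv ℝ f v e) w e := by
    intro e; rw [fderiv_fun_neg]; simp
  rw [h2 1, h2 Complex.I]; ring

lemma deriv2_nonpos {g : ℝ → ℝ} {D : ℝ} (hmax : IsLocalMax g 0)
    (hdiff : ∀ᶠ t in nhds (0:ℝ), DifferentiableAt ℝ g t)
    (hD : HasDerivAt (deriv g) D 0) : D ≤ 0 := by
  by_contra hpos
  push_neg at hpos
  have h0 : deriv g 0 = 0 := hmax.deriv_eq_zero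
  have hs := hasDerivAt_iff_tendsto_slope.mp hD
  have h1 : ∀ᶠ t in nhdsWithin (0:ℝ) {0}ᶜ, 0 < slope (deriv g) 0 t :=
    hs.eventually (eventually_gt_nhds hpos)
  have hev : ∀ᶠ t in nhdsWithin (0:ℝ) (Ioi 0), 0 < deriv g t := by
    have h2 : ∀ᶠ t in nhdsWithin (0:ℝ) (Ioi 0), 0 < slope (deriv g) 0 t :=
      h1.filter_mono (nhdsWithin_mono 0 (fun t ht => ne_of_gt ht))
    filter_upwards [h2, self_mem_nhdsWithin] with t ht h't
    rw [slope_def_field, h0, sub_zero, sub_zero, div_eq_mul_inv] at ht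
    have h't' : (0:ℝ) < t := h't
    have := mul_pos ht h't'
    have heq : deriv g t * t⁻¹ * t = deriv g t := by field_simp
    linarith [heq ▸ this]
  rw [eventually_nhdsWithin_iff] at hev
  have hev' := Metric.eventually_nhds_iff.mp hev
  have hdiff' := Metric.eventually_nhds_iff.mp hdiff
  have hmax' := Metric.eventually_nhds_iff.mp hmax
  obtain ⟨ε₁, hε₁, H₁⟩ := hev'
  obtain ⟨ε₂, hε₂, H₂⟩ := hdiff'
  obtain ⟨ε₃, hε₃, H₃⟩ := hmax'
  set δ := min (min ε₁ ε₂) ε₃ / 2 with hδdef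
  have hδpos : 0 < δ := by positivity
  have hδ1 : δ < ε₁ := by
    have := min_le_left (min ε₁ ε₂) ε₃; have := min_le_left ε₁ ε₂; simp only [hδdef]; linarith
  have hδ2 : δ < ε₂ := by
    have := min_le_left (min ε₁ ε₂) ε₃; have := min_le_right ε₁ ε₂; simp only [hδdef]; linarith
  have hδ3 : δ < ε₃ := by
    have := min_le_right (min ε₁ ε₂) ε₃; simp only [hδdef]; linarith
  have hmono : StrictMonoOn g (Icc 0 δ) := by
    apply strictMonoOn_of_deriv_pos (convex_Icc 0 δ)
    · intro t ht
      rcases ht with ⟨ht1, ht2⟩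
      have : DifferentiableAt ℝ g t := by
        apply H₂
        rw [Real.dist_eq, sub_zero, abs_lt]
        constructor <;> linarith
      exact this.continuousAt.continuousWithinAt
    · intro t ht
      rw [interior_Icc] at ht
      rcases ht with ⟨ht1, ht2⟩
      apply H₁
      · rw [Real.dist_eq, sub_zero, abs_lt]
        constructor <;> linarith
      · exact ht1
  have hlt : g 0 < g δ := hmono ⟨le_refl 0, le_of_lt hδpos⟩ ⟨le_of_lt hδpos, le_refl δ⟩ hδpos
  have hle : g δ ≤ g 0 := by
    apply H₃; rw [Real.dist_eq, sub_zero, abs_lt]; constructor <;> nlinarith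
  linarith

lemma dir2_nonpos {h : ℂ → ℝ} {s : Set ℂ} (hs : IsOpen s) {q : ℂ} (hq : q ∈ s)
    (hC2 : ContDiffOn ℝ 2 h s) (hmax : IsLocalMax h q) (e : ℂ) :
    fderiv ℝ (fun w => fderiv ℝ h w e) q e ≤ 0 := by
  set c : ℝ → ℂ := fun t => q + t • e with hc
  have hcc : Continuous c := by fun_prop
  have hc0 : c 0 = q := by simp [hc]
  have hctends : Filter.Tendsto c (nhds 0) (nhds q) := by
    rw [← hc0]; exact hcc.continuousAt.tendsto
  have hderc : ∀ t : ℝ, HasDerivAt c e t := by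
    intro t
    simpa [hc] using (((hasDerivAt_id t).smul_const e).const_add q)
  set g : ℝ → ℝ := fun t => h (c t) with hg
  -- local max of g at 0
  have hgmax : IsLocalMax g 0 := by
    have := hctends.eventually hmax
    filter_upwards [this] with t ht
    simpa [hg, hc0] using ht
  -- eventual HasDerivAt for g
  have hmem : ∀ᶠ t in nhds (0:ℝ), c t ∈ s := hctends (hs.mem_nhds hq)
  have key1 : ∀ᶠ t in nhds (0:ℝ), HasDerivAt g (fderiv ℝ h (c t) e) t := by
    filter_upwards [hmem] with t ht
    have hdiffh : DifferentiableAt ℝ h (c t) :=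
      (hC2.differentiableOn (by norm_num)).differentiableAt (hs.mem_nhds ht)
    exact hdiffh.hasFDerivAt.comp_hasDerivAt t (hderc t)
  have hdiffg : ∀ᶠ t in nhds (0:ℝ), DifferentiableAt ℝ g t := by
    filter_upwards [key1] with t ht; exact ht.differentiableAt
  -- derivative of deriv g at 0
  have hA : DifferentiableAt ℝ (fun w => fderiv ℝ h w e) q := by
    have h1 : ContDiffAt ℝ 1 (fderiv ℝ h) q :=
      (hC2.contDiffAt (hs.mem_nhds hq)).fderiv_right (by norm_num)
    exact ((ContinuousLinearMap.apply ℝ ℝ e).differentiable.differentiableAt).comp q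
      (h1.differentiableAt one_ne_zero)
  have hG : HasDerivAt (fun t => fderiv ℝ h (c t) e)
      (fderiv ℝ (fun w => fderiv ℝ h w e) q e) 0 := by
    have hA' : HasFDerivAt (fun w => fderiv ℝ h w e)
        (fderiv ℝ (fun w => fderiv ℝ h w e) q) (c 0) := by
      rw [hc0]; exact hA.hasFDerivAt
    have := hA'.comp_hasDerivAt 0 (hderc 0)
    exact this
  have hEq : deriv g =ᶠ[nhds (0:ℝ)] fun t => fderiv ℝ h (c t) e := by
    filter_upwards [key1] with t ht; exact ht.deriv
  have hD : HasDerivAt (deriv g) (fderiv ℝ (fun w => fderiv ℝ h w e) q e) 0 :=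
    (hEq.hasDerivAt_iff).mpr hG
  exact deriv2_nonpos hgmax hdiffg hD

lemma lap_nonpos {h : ℂ → ℝ} {s : Set ℂ} (hs : IsOpen s) {q : ℂ} (hq : q ∈ s)
    (hC2 : ContDiffOn ℝ 2 h s) (hmax : IsLocalMax h q) : laplacian h q ≤ 0 := by
  have h1 := dir2_nonpos hs hq hC2 hmax 1
  have h2 := dir2_nonpos hs hq hC2 hmax Complex.I
  unfold laplacian
  linarith

lemma sq_dist_eq (p v : ℂ) : (v.re - p.re)^2 + (v.im - p.im)^2 = dist v p ^ 2 := by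
  rw [Complex.dist_eq, Complex.sq_norm]
  simp [Complex.normSq_apply, Complex.sub_re, Complex.sub_im]
  ring

lemma hasFDerivAt_A (p : ℂ) (v : ℂ) :
    HasFDerivAt (fun w : ℂ => 1 - ((w.re - p.re)^2 + (w.im - p.im)^2))
      ((-(2*(v.re - p.re))) • (Complex.reCLM : ℂ →L[ℝ] ℝ) +
       (-(2*(v.im - p.im))) • (Complex.imCLM : ℂ →L[ℝ] ℝ)) v := by
  have h1 : HasDerivAt (fun x : ℝ => (x - p.re)^2) (2*(v.re - p.re)) v.re := by
    simpa [mul_comm] using (((hasDerivAt_id v.re).sub_const p.re).fun_pow 2)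
  have h2 : HasDerivAt (fun x : ℝ => (x - p.im)^2) (2*(v.im - p.im)) v.im := by
    simpa [mul_comm] using (((hasDerivAt_id v.im).sub_const p.im).fun_pow 2)
  have h3 := ((h1.comp_hasFDerivAt v Complex.reCLM.hasFDerivAt).add
    (h2.comp_hasFDerivAt v Complex.imCLM.hasFDerivAt)).const_sub 1
  have h4 := h3.congr_fderiv (show -((2*(v.re - p.re)) • (Complex.reCLM : ℂ →L[ℝ] ℝ) +
      (2*(v.im - p.im)) • (Complex.imCLM : ℂ →L[ℝ] ℝ)) =
      (-(2*(v.re - p.re))) • (Complex.reCLM : ℂ →L[ℝ] ℝ) +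
      (-(2*(v.im - p.im))) • (Complex.imCLM : ℂ →L[ℝ] ℝ) by
    ext u; simp; ring)
  exact h4

lemma lap_barrier (p : ℂ) (c2 : ℝ) {q : ℂ} (hq : q ∈ Metric.ball p 1) :
    laplacian (fun w => c2 + Real.log (1 - ((w.re - p.re)^2 + (w.im - p.im)^2))) q
      = -4 * (((1 - ((q.re - p.re)^2 + (q.im - p.im)^2)))^2)⁻¹ := by
  set A : ℂ → ℝ := fun w => 1 - ((w.re - p.re)^2 + (w.im - p.im)^2) with hA
  have hApos : ∀ v ∈ Metric.ball p 1, 0 < A v := by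
    intro v hv
    have hd : dist v p < 1 := Metric.mem_ball.mp hv
    have hd0 : (0:ℝ) ≤ dist v p := dist_nonneg
    have := sq_dist_eq p v
    simp only [hA]
    nlinarith
  set fx : ℂ → ℝ := fun v => (-(2*(v.re - p.re))) * (A v)⁻¹ with hfx
  set fy : ℂ → ℝ := fun v => (-(2*(v.im - p.im))) * (A v)⁻¹ with hfy
  have hf : ∀ v ∈ Metric.ball p 1,
      HasFDerivAt (fun w => c2 + Real.log (A w))
        ((fx v) • (Complex.reCLM : ℂ →L[ℝ] ℝ) + (fy v) • (Complex.imCLM : ℂ →L[ℝ] ℝ)) v := by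
    intro v hv
    have hA0 : A v ≠ 0 := ne_of_gt (hApos v hv)
    have hlog := (Real.hasDerivAt_log hA0).comp_hasFDerivAt v (hasFDerivAt_A p v)
    have := (hlog.const_add c2).congr_fderiv
      (show (A v)⁻¹ • ((-(2 * (v.re - p.re))) • (Complex.reCLM : ℂ →L[ℝ] ℝ) +
        (-(2 * (v.im - p.im))) • (Complex.imCLM : ℂ →L[ℝ] ℝ)) =
        (fx v) • (Complex.reCLM : ℂ →L[ℝ] ℝ) + (fy v) • (Complex.imCLM : ℂ →L[ℝ] ℝ) by
      ext u; simp [hfx, hfy]; ring)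
    exact this
  -- second derivatives of fx and fy at q
  have hA0 : A q ≠ 0 := ne_of_gt (hApos q hq)
  have hinv : HasFDerivAt (fun v => (A v)⁻¹)
      (-((A q)^2)⁻¹ • ((-(2*(q.re - p.re))) • (Complex.reCLM : ℂ →L[ℝ] ℝ) +
       (-(2*(q.im - p.im))) • (Complex.imCLM : ℂ →L[ℝ] ℝ))) q :=
    (hasDerivAt_inv hA0).comp_hasFDerivAt q (hasFDerivAt_A p q)
  have hlin1 : HasFDerivAt (fun v : ℂ => -(2*(v.re - p.re)))
      ((-2 : ℝ) • (Complex.reCLM : ℂ →L[ℝ] ℝ)) q := by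
    have : HasDerivAt (fun x : ℝ => -(2*(x - p.re))) (-2) q.re := by
      simpa using (((hasDerivAt_id q.re).sub_const p.re).const_mul 2).fun_neg
    exact this.comp_hasFDerivAt q Complex.reCLM.hasFDerivAt
  have hlin2 : HasFDerivAt (fun v : ℂ => -(2*(v.im - p.im)))
      ((-2 : ℝ) • (Complex.imCLM : ℂ →L[ℝ] ℝ)) q := by
    have : HasDerivAt (fun x : ℝ => -(2*(x - p.im))) (-2) q.im := by
      simpa using (((hasDerivAt_id q.im).sub_const p.im).const_mul 2).fun_neg
    exact this.comp_hasFDerivAt q Complex.imCLM.hasFDerivAt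
  have hx := hlin1.mul hinv
  have hy := hlin2.mul hinv
  rw [laplacian_eq Metric.isOpen_ball hf hq hx hy]
  have hA0' : (1 - ((q.re - p.re)^2 + (q.im - p.im)^2)) ≠ 0 := hA0
  simp only [ContinuousLinearMap.add_apply, ContinuousLinearMap.smul_apply,
    ContinuousLinearMap.neg_apply, Complex.reCLM_apply, Complex.imCLM_apply,
    Complex.one_re, Complex.one_im, Complex.I_re, Complex.I_im, smul_eq_mul, hA]
  field_simp
  ring

lemma lap_F (zr zi : ℝ) (C : ℝ) (q : ℂ) :
    laplacian (fun w => C * (Real.cosh (Real.sqrt 2 * (w.re - zr)) *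
        Real.cosh (Real.sqrt 2 * (w.im - zi)))) q
    = 4 * (C * (Real.cosh (Real.sqrt 2 * (q.re - zr)) *
        Real.cosh (Real.sqrt 2 * (q.im - zi)))) := by
  set s : ℝ := Real.sqrt 2 with hsdef
  have h2 : s * s = 2 := Real.mul_self_sqrt (by norm_num)
  set fx : ℂ → ℝ := fun v => (C * (s * Real.sinh (s*(v.re - zr)))) * Real.cosh (s*(v.im - zi)) with hfx
  set fy : ℂ → ℝ := fun v => Real.cosh (s*(v.re - zr)) * (C * (s * Real.sinh (s*(v.im - zi)))) with hfy
  have hcoshre : ∀ v : ℂ, HasFDerivAt (fun w : ℂ => Real.cosh (s*(w.re - zr)))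
      ((Real.sinh (s*(v.re - zr)) * (s * 1)) • (Complex.reCLM : ℂ →L[ℝ] ℝ)) v := by
    intro v
    exact ((((hasDerivAt_id v.re).sub_const zr).const_mul s).cosh).comp_hasFDerivAt v
      Complex.reCLM.hasFDerivAt
  have hcoshim : ∀ v : ℂ, HasFDerivAt (fun w : ℂ => Real.cosh (s*(w.im - zi)))
      ((Real.sinh (s*(v.im - zi)) * (s * 1)) • (Complex.imCLM : ℂ →L[ℝ] ℝ)) v := by
    intro v
    exact ((((hasDerivAt_id v.im).sub_const zi).const_mul s).cosh).comp_hasFDerivAt v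
      Complex.imCLM.hasFDerivAt
  have hf : ∀ v ∈ (Set.univ : Set ℂ),
      HasFDerivAt (fun w => C * (Real.cosh (s * (w.re - zr)) * Real.cosh (s * (w.im - zi))))
        ((fx v) • (Complex.reCLM : ℂ →L[ℝ] ℝ) + (fy v) • (Complex.imCLM : ℂ →L[ℝ] ℝ)) v := by
    intro v _
    have := (((hcoshre v).mul (hcoshim v)).const_mul C)
    apply this.congr_fderiv
    ext u
    simp [hfx, hfy]
    ring
  have hx : HasFDerivAt fx
      (((C * (s * Real.sinh (s*(q.re - zr)))) • ((Real.sinh (s*(q.im - zi)) * (s * 1)) • (Complex.imCLM : ℂ →L[ℝ] ℝ)))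
       + (Real.cosh (s*(q.im - zi)) • ((C * (s * (Real.cosh (s*(q.re - zr)) * (s * 1)))) • (Complex.reCLM : ℂ →L[ℝ] ℝ)))) q := by
    have h1 : HasFDerivAt (fun w : ℂ => C * (s * Real.sinh (s*(w.re - zr))))
        ((C * (s * (Real.cosh (s*(q.re - zr)) * (s * 1)))) • (Complex.reCLM : ℂ →L[ℝ] ℝ)) q :=
      (((((hasDerivAt_id q.re).sub_const zr).const_mul s).sinh).const_mul s).const_mul C
        |>.comp_hasFDerivAt q Complex.reCLM.hasFDerivAt
    exact h1.mul (hcoshim q)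
  have hy : HasFDerivAt fy
      ((Real.cosh (s*(q.re - zr)) • ((C * (s * (Real.cosh (s*(q.im - zi)) * (s * 1)))) • (Complex.imCLM : ℂ →L[ℝ] ℝ)))
       + ((C * (s * Real.sinh (s*(q.im - zi)))) • ((Real.sinh (s*(q.re - zr)) * (s * 1)) • (Complex.reCLM : ℂ →L[ℝ] ℝ)))) q := by
    have h1 : HasFDerivAt (fun w : ℂ => C * (s * Real.sinh (s*(w.im - zi))))
        ((C * (s * (Real.cosh (s*(q.im - zi)) * (s * 1)))) • (Complex.imCLM : ℂ →L[ℝ] ℝ)) q :=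
      (((((hasDerivAt_id q.im).sub_const zi).const_mul s).sinh).const_mul s).const_mul C
        |>.comp_hasFDerivAt q Complex.imCLM.hasFDerivAt
    exact (hcoshre q).mul h1
  rw [laplacian_eq isOpen_univ hf (Set.mem_univ q) hx hy]
  simp only [ContinuousLinearMap.add_apply, ContinuousLinearMap.smul_apply,
    Complex.reCLM_apply, Complex.imCLM_apply, Complex.one_re, Complex.one_im,
    Complex.I_re, Complex.I_im, smul_eq_mul]
  linear_combination (2 * C * Real.cosh (s*(q.re - zr)) * Real.cosh (s*(q.im - zi))) * h2



lemma stepA (R₀ : ℝ) (ω : ℂ → ℝ)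
    (hC2 : ContDiffOn ℝ 2 ω {z : ℂ | R₀ < ‖z‖})
    (heq : ∀ z : ℂ, R₀ < ‖z‖ → laplacian ω z = 2 * Real.sinh (2 * ω z))
    {p : ℂ} (hp : R₀ + 1 < ‖p‖) :
    ω p ≤ Real.log 2 - (1/2) * Real.log (15/16) := by
  have hsubcb : Metric.closedBall p 1 ⊆ {z : ℂ | R₀ < ‖z‖} := by
    intro w hw
    have hd : dist w p ≤ 1 := Metric.mem_closedBall.mp hw
    have h1 : ‖p‖ ≤ ‖p - w‖ + ‖w‖ := by
      simpa using norm_add_le (p - w) w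
    have h2 : ‖p - w‖ = dist w p := by
      rw [dist_comm, dist_eq_norm]
    simp only [Set.mem_setOf_eq]
    rw [h2] at h1
    linarith
  have hsubball : Metric.ball p 1 ⊆ {z : ℂ | R₀ < ‖z‖} :=
    Metric.ball_subset_closedBall.trans hsubcb
  have hContω : ContinuousOn ω (Metric.closedBall p 1) := hC2.continuousOn.mono hsubcb
  obtain ⟨m, hm_mem, hm⟩ := (isCompact_closedBall p 1).exists_isMaxOn
    ⟨p, Metric.mem_closedBall_self (by norm_num)⟩ hContω
  set M := ω m with hM
  set c : ℝ := (1/2) * Real.log (15/16) with hc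
  have hclt : c < 0 := by
    have := Real.log_neg (by norm_num : (0:ℝ) < 15/16) (by norm_num : (15:ℝ)/16 < 1)
    rw [hc]; linarith
  set δ : ℝ := min (2 * Real.exp (-(M + c))) (1/2) with hδdef
  have hδpos : 0 < δ := lt_min (by positivity) (by norm_num)
  have hδle : δ ≤ 2 * Real.exp (-(M + c)) := min_le_left _ _
  have hδhalf : δ ≤ 1/2 := min_le_right _ _
  set ρ : ℝ := Real.sqrt (1 - δ) with hρdef
  have hρsq : ρ^2 = 1 - δ := Real.sq_sqrt (by linarith)
  have hρpos : 0 < ρ := Real.sqrt_pos.mpr (by linarith)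
  have hρlt : ρ < 1 := by nlinarith
  set A : ℂ → ℝ := fun w => 1 - ((w.re - p.re)^2 + (w.im - p.im)^2) with hA
  have hApball : ∀ w ∈ Metric.ball p 1, 0 < A w := by
    intro w hw
    have hd : dist w p < 1 := Metric.mem_ball.mp hw
    have hd0 : (0:ℝ) ≤ dist w p := dist_nonneg
    have := sq_dist_eq p w
    simp only [hA]; nlinarith
  set g : ℂ → ℝ := fun w => (c - Real.log 2) + Real.log (A w) with hg
  set h : ℂ → ℝ := fun w => ω w + g w with hh
  -- annulus bound
  have hann : ∀ w : ℂ, dist w p < 1 → ρ ≤ dist w p → h w ≤ 0 := by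
    intro w h1 h2
    have hA1 : A w = 1 - dist w p^2 := by simp only [hA]; rw [sq_dist_eq]
    have hApos : 0 < A w := hApball w (Metric.mem_ball.mpr h1)
    have hle : A w ≤ δ := by rw [hA1]; nlinarith
    have hlog : Real.log (A w) ≤ Real.log (2 * Real.exp (-(M + c))) :=
      Real.log_le_log hApos (le_trans hle hδle)
    rw [Real.log_mul two_ne_zero (Real.exp_ne_zero _), Real.log_exp] at hlog
    have hωw : ω w ≤ M := hm (Metric.mem_closedBall.mpr h1.le)
    simp only [hh, hg]
    linarith
  -- continuity of h on ball p 1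
  have hAcont : Continuous A := by fun_prop
  have hconth : ContinuousOn h (Metric.ball p 1) := by
    apply ContinuousOn.add (hContω.mono Metric.ball_subset_closedBall)
    apply ContinuousOn.add continuousOn_const
    exact ContinuousOn.log hAcont.continuousOn (fun w hw => ne_of_gt (hApball w hw))
  have hsub2 : Metric.closedBall p ρ ⊆ Metric.ball p 1 :=
    Metric.closedBall_subset_ball (by linarith)
  obtain ⟨q, hqmem, hqmax⟩ := (isCompact_closedBall p ρ).exists_isMaxOn
    ⟨p, Metric.mem_closedBall_self hρpos.le⟩ (hconth.mono hsub2)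
  have hq0 : h q ≤ 0 := by
    by_contra hpos
    push_neg at hpos
    have hqb1 : q ∈ Metric.ball p 1 := hsub2 hqmem
    have hqball : dist q p < ρ := by
      rcases (Metric.mem_closedBall.mp hqmem).lt_or_eq with hlt | heqd
      · exact hlt
      · exact absurd (hann q (Metric.mem_ball.mp hqb1) heqd.ge) (by linarith)
    have hlocal : IsLocalMax h q := by
      filter_upwards [Metric.isOpen_ball.mem_nhds hqb1] with w hw
      by_cases hcase : w ∈ Metric.closedBall p ρ
      · exact hqmax hcase
      · have hge : ρ ≤ dist w p :=
          le_of_lt (lt_of_not_ge (fun hcc => hcase (Metric.mem_closedBall.mpr hcc)))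
        have := hann w (Metric.mem_ball.mp hw) hge
        linarith
    -- C² of pieces
    have hACD : ContDiff ℝ 2 A := by
      have hre : ContDiff ℝ 2 (fun w : ℂ => w.re) := Complex.reCLM.contDiff
      have him : ContDiff ℝ 2 (fun w : ℂ => w.im) := Complex.imCLM.contDiff
      exact contDiff_const.sub (((hre.sub contDiff_const).pow 2).add
        ((him.sub contDiff_const).pow 2))
    have hC2g : ContDiffOn ℝ 2 g (Metric.ball p 1) := by
      apply ContDiffOn.add contDiffOn_const
      exact ContDiffOn.log (hACD.contDiffOn) (fun w hw => ne_of_gt (hApball w hw))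
    have hlapnp : laplacian h q ≤ 0 :=
      lap_nonpos Metric.isOpen_ball hqb1 ((hC2.mono hsubball).add hC2g) hlocal
    have hlapeq : laplacian h q = 2 * Real.sinh (2 * ω q) + (-4 * ((A q)^2)⁻¹) := by
      have h1 := laplacian_add Metric.isOpen_ball (hC2.mono hsubball) hC2g hqb1
      rw [hh]
      rw [h1, heq q (hsubball hqb1)]
      congr 1
      exact lap_barrier p (c - Real.log 2) hqb1
    -- positivity of laplacian h q : contradiction
    set t := ω q with ht
    have hAq : 0 < A q := hApball q hqb1
    have hAqle : A q ≤ 1 := by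
      simp only [hA]; nlinarith [sq_nonneg (q.re - p.re), sq_nonneg (q.im - p.im)]
    have hlogAq : Real.log (A q) ≤ 0 := Real.log_nonpos hAq.le hAqle
    have hkey : Real.log 2 - Real.log (A q) < t + c := by
      have hq' : 0 < t + ((c - Real.log 2) + Real.log (A q)) := hpos
      linarith
    have hlog2pos : (0:ℝ) < Real.log 2 := Real.log_pos (by norm_num)
    have htbig : Real.log 2 < t := by linarith
    -- step 1 : exp (2*(t+c)) > 4 / (A q)^2
    have hstep1 : 4 * ((A q)^2)⁻¹ < Real.exp (2*(t + c)) := by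
      have hmono : Real.exp (2*(Real.log 2 - Real.log (A q))) < Real.exp (2*(t + c)) :=
        Real.exp_lt_exp.mpr (by linarith)
      have hcalc : Real.exp (2*(Real.log 2 - Real.log (A q))) = 4 * ((A q)^2)⁻¹ := by
        rw [show 2*(Real.log 2 - Real.log (A q)) = 2*Real.log 2 + (-(2 * Real.log (A q))) by ring,
          Real.exp_add]
        congr 1
        · rw [show (2:ℝ)*Real.log 2 = Real.log (2^2) by rw [Real.log_pow]; push_cast; ring]
          rw [Real.exp_log (by norm_num)]; norm_num
        · rw [show -(2 * Real.log (A q)) = Real.log (((A q)^2)⁻¹) by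
            rw [Real.log_inv, Real.log_pow]; push_cast; ring]
          rw [Real.exp_log (by positivity)]
      rw [← hcalc]; exact hmono
    -- step 2 : 2 sinh (2t) ≥ exp (2(t+c))
    have hstep2 : Real.exp (2*(t + c)) ≤ 2 * Real.sinh (2*t) := by
      have hexpc : Real.exp (2*c) = 15/16 := by
        rw [hc, show 2*((1:ℝ)/2 * Real.log (15/16)) = Real.log (15/16) by ring,
          Real.exp_log (by norm_num)]
      have hsinh : 2 * Real.sinh (2*t) = Real.exp (2*t) - Real.exp (-(2*t)) := by
        rw [Real.sinh_eq]; ring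
      have hsplit : Real.exp (-(2*t)) = Real.exp (2*t) * Real.exp (-(4*t)) := by
        rw [← Real.exp_add]; ring_nf
      have hsmall : Real.exp (-(4*t)) < 1/16 := by
        have h16 : Real.log (1/16) = -(4 * Real.log 2) := by
          rw [show (1:ℝ)/16 = ((2:ℝ)^4)⁻¹ by norm_num, Real.log_inv, Real.log_pow]
          push_cast; ring
        have : Real.exp (-(4*t)) < Real.exp (Real.log (1/16)) := by
          apply Real.exp_lt_exp.mpr; rw [h16]; linarith
        rwa [Real.exp_log (by norm_num : (0:ℝ) < 1/16)] at this
      have hexp2t : (0:ℝ) < Real.exp (2*t) := Real.exp_pos _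
      have hmul : Real.exp (2*(t+c)) = Real.exp (2*t) * (15/16) := by
        rw [show 2*(t+c) = 2*t + 2*c by ring, Real.exp_add, hexpc]
      rw [hmul, hsinh, hsplit]
      nlinarith
    have : 0 < laplacian h q := by
      rw [hlapeq]
      have : 4 * ((A q)^2)⁻¹ < 2 * Real.sinh (2*t) := lt_of_lt_of_le hstep1 hstep2
      linarith
    linarith
  -- conclude
  have hhp : h p ≤ 0 := le_trans (hqmax (Metric.mem_closedBall_self hρpos.le)) hq0
  have hAp : A p = 1 := by simp [hA]
  simp only [hh, hg, hAp, Real.log_one, add_zero] at hhp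
  linarith



lemma abs_lower {z w : ℂ} {r : ℝ} (h : dist w z ≤ r) :
    ‖z‖ - r ≤ ‖w‖ := by
  have h1 : ‖z‖ ≤ ‖z - w‖ + ‖w‖ := by
    simpa using norm_add_le (z - w) w
  have h2 : ‖z - w‖ = dist w z := by
    rw [dist_comm, dist_eq_norm]
  rw [h2] at h1
  linarith

lemma stepB (R₀ : ℝ) (ω : ℂ → ℝ) (K₀ : ℝ) (hK₀pos : 0 < K₀)
    (hC2 : ContDiffOn ℝ 2 ω {z : ℂ | R₀ < ‖z‖})
    (heq : ∀ z : ℂ, R₀ < ‖z‖ → laplacian ω z = 2 * Real.sinh (2 * ω z))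
    (hbd : ∀ p : ℂ, R₀ + 1 < ‖p‖ → ω p ≤ K₀)
    (hR₀ : 0 < R₀)
    {z : ℂ} (hz : R₀ + 2 < ‖z‖) :
    ω z ≤ K₀ / Real.cosh (‖z‖ - R₀ - 2) := by
  set r : ℝ := ‖z‖ - R₀ - 2 with hr
  have hrpos : 0 < r := by rw [hr]; linarith
  have hcoshr : 0 < Real.cosh r := Real.cosh_pos r
  set C : ℝ := K₀ / Real.cosh r with hC
  have hCpos : 0 < C := div_pos hK₀pos hcoshr
  set F : ℂ → ℝ := fun w => C * (Real.cosh (Real.sqrt 2 * (w.re - z.re)) *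
    Real.cosh (Real.sqrt 2 * (w.im - z.im))) with hF
  have hFpos : ∀ w, 0 < F w := fun w =>
    mul_pos hCpos (mul_pos (Real.cosh_pos _) (Real.cosh_pos _))
  have hsubcb : ∀ w ∈ Metric.closedBall z r, R₀ + 1 < ‖w‖ := by
    intro w hw
    have := abs_lower (Metric.mem_closedBall.mp hw)
    rw [hr] at this
    linarith
  have hsubdom : Metric.closedBall z r ⊆ {w : ℂ | R₀ < ‖w‖} := by
    intro w hw
    have := hsubcb w hw
    simp only [Set.mem_setOf_eq]; linarith
  have hsubball : Metric.ball z r ⊆ {w : ℂ | R₀ < ‖w‖} :=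
    Metric.ball_subset_closedBall.trans hsubdom
  set g : ℂ → ℝ := fun w => -F w with hg
  set h : ℂ → ℝ := fun w => ω w + g w with hh
  have hFCD : ContDiff ℝ 2 F := by
    rw [hF]
    have hre : ContDiff ℝ 2 (fun w : ℂ => Real.sqrt 2 * (w.re - z.re)) :=
      contDiff_const.mul (Complex.reCLM.contDiff.sub contDiff_const)
    have him : ContDiff ℝ 2 (fun w : ℂ => Real.sqrt 2 * (w.im - z.im)) :=
      contDiff_const.mul (Complex.imCLM.contDiff.sub contDiff_const)
    exact contDiff_const.mul ((hre.cosh).mul (him.cosh))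
  have hconth : ContinuousOn h (Metric.closedBall z r) := by
    apply ContinuousOn.add (hC2.continuousOn.mono hsubdom)
    exact (hFCD.continuous.neg).continuousOn
  obtain ⟨q, hqmem, hqmax⟩ := (isCompact_closedBall z r).exists_isMaxOn
    ⟨z, Metric.mem_closedBall_self hrpos.le⟩ hconth
  have hq0 : h q ≤ 0 := by
    by_contra hpos
    push_neg at hpos
    have hωqbd : ω q ≤ K₀ := hbd q (hsubcb q hqmem)
    have hqball : dist q z < r := by
      rcases (Metric.mem_closedBall.mp hqmem).lt_or_eq with hlt | heqd
      · exact hlt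
      · exfalso
        -- boundary: F q ≥ K₀
        set x := q.re - z.re with hx
        set y := q.im - z.im with hy
        have hxy : x^2 + y^2 = r^2 := by rw [hx, hy, sq_dist_eq, heqd]
        have hFq : K₀ ≤ F q := by
          have hCcosh : C * Real.cosh r = K₀ := by
            rw [hC]; field_simp
          have hone : ∀ u : ℝ, 1 ≤ Real.cosh u := Real.one_le_cosh
          rcases le_total (x^2) (y^2) with hcmp | hcmp
          · have h2y : r ≤ |Real.sqrt 2 * y| := by
              have hsq : r^2 ≤ (Real.sqrt 2 * |y|)^2 := by
                rw [mul_pow, Real.sq_sqrt (by norm_num : (0:ℝ) ≤ 2), sq_abs]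
                nlinarith
              have h0 : 0 ≤ Real.sqrt 2 * |y| := by positivity
              rw [abs_mul, abs_of_nonneg (Real.sqrt_nonneg 2)]
              nlinarith
            have hcosh : Real.cosh r ≤ Real.cosh (Real.sqrt 2 * y) := by
              rw [Real.cosh_le_cosh, abs_of_pos hrpos]
              exact h2y
            calc K₀ = C * Real.cosh r := hCcosh.symm
            _ ≤ C * Real.cosh (Real.sqrt 2 * y) := mul_le_mul_of_nonneg_left hcosh hCpos.le
            _ ≤ C * (Real.cosh (Real.sqrt 2 * x) * Real.cosh (Real.sqrt 2 * y)) := by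
                nlinarith [mul_nonneg (mul_pos hCpos (Real.cosh_pos (Real.sqrt 2 * y))).le
                  (sub_nonneg.mpr (hone (Real.sqrt 2 * x)))]
            _ = F q := by rw [hF]
          · have h2x : r ≤ |Real.sqrt 2 * x| := by
              have hsq : r^2 ≤ (Real.sqrt 2 * |x|)^2 := by
                rw [mul_pow, Real.sq_sqrt (by norm_num : (0:ℝ) ≤ 2), sq_abs]
                nlinarith
              have h0 : 0 ≤ Real.sqrt 2 * |x| := by positivity
              rw [abs_mul, abs_of_nonneg (Real.sqrt_nonneg 2)]
              nlinarith
            have hcosh : Real.cosh r ≤ Real.cosh (Real.sqrt 2 * x) := by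
              rw [Real.cosh_le_cosh, abs_of_pos hrpos]
              exact h2x
            calc K₀ = C * Real.cosh r := hCcosh.symm
            _ ≤ C * Real.cosh (Real.sqrt 2 * x) := mul_le_mul_of_nonneg_left hcosh hCpos.le
            _ ≤ C * (Real.cosh (Real.sqrt 2 * x) * Real.cosh (Real.sqrt 2 * y)) := by
                nlinarith [mul_nonneg (mul_pos hCpos (Real.cosh_pos (Real.sqrt 2 * x))).le
                  (sub_nonneg.mpr (hone (Real.sqrt 2 * y)))]
            _ = F q := by rw [hF]
        have : h q ≤ 0 := by
          simp only [hh, hg]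
          linarith
        linarith
    have hqb1 : q ∈ Metric.ball z r := Metric.mem_ball.mpr hqball
    have hlocal : IsLocalMax h q := by
      filter_upwards [Metric.isOpen_ball.mem_nhds hqb1] with w hw
      exact hqmax (Metric.ball_subset_closedBall hw)
    have hC2h : ContDiffOn ℝ 2 h (Metric.ball z r) :=
      (hC2.mono hsubball).add ((hFCD.neg).contDiffOn)
    have hlapnp : laplacian h q ≤ 0 := lap_nonpos Metric.isOpen_ball hqb1 hC2h hlocal
    have hlapeq : laplacian h q = 2 * Real.sinh (2 * ω q) + (-(4 * F q)) := by
      rw [hh, laplacian_add Metric.isOpen_ball (hC2.mono hsubball) ((hFCD.neg).contDiffOn) hqb1,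
        heq q (hsubball hqb1), laplacian_neg F q]
      congr 1
      rw [hF]
      congr 1
      exact lap_F z.re z.im C q
    have hωF : F q < ω q := by
      have : 0 < ω q + g q := hpos
      simp only [hg] at this
      linarith
    have hsinh : 2 * ω q ≤ Real.sinh (2 * ω q) :=
      Real.self_le_sinh_iff.mpr (by nlinarith [hFpos q])
    have : 0 < laplacian h q := by
      rw [hlapeq]
      nlinarith [hFpos q]
    linarith
  have hhz : h z ≤ 0 := le_trans (hqmax (Metric.mem_closedBall_self hrpos.le)) hq0
  have hFz : F z = C := by
    simp [hF]
  simp only [hh, hg, hFz] at hhz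
  rw [hC] at hhz
  linarith


lemma cosh_tendsto : Filter.Tendsto Real.cosh Filter.atTop Filter.atTop := by
  apply tendsto_atTop_mono (fun x => ?_)
    (Filter.Tendsto.atTop_div_const two_pos Real.tendsto_exp_atTop)
  rw [Real.cosh_eq]
  have := Real.exp_nonneg (-x)
  linarith

/-- Exponential decay of solutions of the sinh-Gordon equation on an exterior domain
(Claim 1 of the paper): with `K₀ = ln 4 + ½ ln((2+√5)/4)`, one has
`|ω(z)| ≤ K₀ / cosh(|z| − R₀ − 2)` for `|z| > R₀ + 2`; in particular `ω(z) → 0`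
uniformly as `|z| → ∞`. -/
theorem stmt5 (R₀ : ℝ) (hR₀ : 0 < R₀) (ω : ℂ → ℝ)
    (hC2 : ContDiffOn ℝ 2 ω {z : ℂ | R₀ < ‖z‖})
    (heq : ∀ z : ℂ, R₀ < ‖z‖ → laplacian ω z = 2 * Real.sinh (2 * ω z)) :
    (∀ z : ℂ, R₀ + 2 < ‖z‖ →
      |ω z| ≤ (Real.log 4 + (1 / 2) * Real.log ((2 + Real.sqrt 5) / 4)) /
        Real.cosh (‖z‖ - R₀ - 2)) ∧
      Filter.Tendsto ω (Filter.comap (fun z : ℂ => ‖z‖) Filter.atTop) (nhds 0) := by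
  set K₀ : ℝ := Real.log 4 + (1 / 2) * Real.log ((2 + Real.sqrt 5) / 4) with hK₀def
  have hsqrt5 : 2 ≤ Real.sqrt 5 := by
    nlinarith [Real.sq_sqrt (show (0:ℝ) ≤ 5 by norm_num), Real.sqrt_nonneg 5]
  have hK0eq : K₀ = Real.log 2 + (1/2) * Real.log (2 + Real.sqrt 5) := by
    rw [hK₀def, Real.log_div (by positivity) (by norm_num),
      show (4:ℝ) = 2^2 by norm_num, Real.log_pow]
    push_cast
    ring
  have hKle : Real.log 2 - (1/2) * Real.log (15/16) ≤ K₀ := by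
    rw [hK0eq, show (15:ℝ)/16 = ((16:ℝ)/15)⁻¹ by norm_num, Real.log_inv]
    have hlog : Real.log ((16:ℝ)/15) ≤ Real.log (2 + Real.sqrt 5) :=
      Real.log_le_log (by norm_num) (by linarith)
    linarith
  have hlog2 : (0:ℝ) < Real.log 2 := Real.log_pos (by norm_num)
  have hK0pos : 0 < K₀ := by
    rw [hK0eq]
    have h2 : (0:ℝ) ≤ Real.log (2 + Real.sqrt 5) := Real.log_nonneg (by linarith)
    linarith
  -- negated solution
  have hC2n : ContDiffOn ℝ 2 (fun w => -ω w) {z : ℂ | R₀ < ‖z‖} := hC2.neg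
  have heqn : ∀ z : ℂ, R₀ < ‖z‖ →
      laplacian (fun w => -ω w) z = 2 * Real.sinh (2 * (fun w => -ω w) z) := by
    intro z hz
    rw [laplacian_neg ω z, heq z hz]
    simp [Real.sinh_neg]
  -- uniform one-sided bounds at distance 1
  have hbdA : ∀ p : ℂ, R₀ + 1 < ‖p‖ → ω p ≤ K₀ :=
    fun p hp => le_trans (stepA R₀ ω hC2 heq hp) hKle
  have hbdAn : ∀ p : ℂ, R₀ + 1 < ‖p‖ → (fun w => -ω w) p ≤ K₀ :=
    fun p hp => le_trans (stepA R₀ (fun w => -ω w) hC2n heqn hp) hKle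
  have hmain : ∀ z : ℂ, R₀ + 2 < ‖z‖ →
      |ω z| ≤ K₀ / Real.cosh (‖z‖ - R₀ - 2) := by
    intro z hz
    have h1 := stepB R₀ ω K₀ hK0pos hC2 heq hbdA hR₀ hz
    have h2 := stepB R₀ (fun w => -ω w) K₀ hK0pos hC2n heqn hbdAn hR₀ hz
    rw [abs_le]
    constructor
    · linarith
    · exact h1
  refine ⟨hmain, ?_⟩
  have hcoshcomp : Filter.Tendsto (fun t : ℝ => Real.cosh (t - R₀ - 2)) atTop atTop := by
    apply cosh_tendsto.comp
    have h1 : Filter.Tendsto (fun t : ℝ => t + (-(R₀ + 2))) atTop atTop :=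
      tendsto_atTop_add_const_right atTop (-(R₀ + 2)) tendsto_id
    have h2 : (fun t : ℝ => t - R₀ - 2) = fun t : ℝ => t + (-(R₀ + 2)) := by
      funext t; ring
    rw [h2]
    exact h1
  have htend : Filter.Tendsto (fun t : ℝ => K₀ / Real.cosh (t - R₀ - 2)) atTop (nhds 0) :=
    Filter.Tendsto.div_atTop tendsto_const_nhds hcoshcomp
  have hg0 : Filter.Tendsto (fun z : ℂ => K₀ / Real.cosh (‖z‖ - R₀ - 2))
      (Filter.comap (fun z : ℂ => ‖z‖) Filter.atTop) (nhds 0) := htend.comp tendsto_comap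
  apply squeeze_zero_norm' ?_ hg0
  have hmem : {z : ℂ | R₀ + 2 < ‖z‖} ∈ Filter.comap (fun z : ℂ => ‖z‖) Filter.atTop := by
    refine ⟨Set.Ioi (R₀ + 2), Ioi_mem_atTop _, ?_⟩
    intro z hz
    exact hz
  filter_upwards [hmem] with z hz
  rw [Real.norm_eq_abs]
  exact hmain z hz
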